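/- arXiv:1701.08409 — 3 statements merged into one kernel-verified Lean document; each statement's English description precedes it below -/
import Mathlib

section
/- Let r ≥ 2 be an integer. For 1 ≤ l ≤ 2^{r−1}−1 set ξ_l = exp(iπl/2^{r−1}) and λ_l = 1 + ξ_l^{−1}. Let d₀ ∈ ℝ and d₁, …, d_{2^{r−1}−1} ∈ ℂ, and define the real sequence a_n = d₀·2ⁿ + 2·Σ_{l=1}^{2^{r−1}−1} Re(d_l·λ_lⁿ). Set t₀(n) = d₀·2ⁿ and t_l(n) = Re(d_l·λ_lⁿ) for 1 ≤ l ≤ 2^{r−1}−1. Then there exists an integer n₀ such that for every n > n₀, a_n = 0 if and only if t_l(n) = 0 for all 0 ≤ l ≤ 2^{r−1}−1. -/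
lemma aux_periodic_lb (f : ℕ → ℝ) (N : ℕ) (hN : 0 < N) (hf : ∀ n, f (n + N) = f n) :
    ∃ c : ℝ, 0 < c ∧ ∀ n, f n ≠ 0 → c ≤ |f n| := by
  have hp : Function.Periodic f N := hf
  have hmod : ∀ n, f (n % N) = f n := fun n => hp.map_mod_nat n
  set S := (Finset.range N).filter (fun s => f s ≠ 0) with hS
  rcases S.eq_empty_or_nonempty with h | h
  · refine ⟨1, one_pos, fun n hn => ?_⟩
    exfalso
    have hmem : n % N ∈ S := by
      simp only [hS, Finset.mem_filter, Finset.mem_range]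
      exact ⟨Nat.mod_lt _ hN, by rw [hmod]; exact hn⟩
    rw [h] at hmem; exact absurd hmem (Finset.notMem_empty _)
  · refine ⟨S.inf' h (fun s => |f s|), ?_, ?_⟩
    · rw [Finset.lt_inf'_iff]
      intro s hs
      exact abs_pos.2 (Finset.mem_filter.1 hs).2
    · intro n hn
      have hmem : n % N ∈ S := Finset.mem_filter.2
        ⟨Finset.mem_range.2 (Nat.mod_lt _ hN), by rw [hmod]; exact hn⟩
      calc S.inf' h (fun s => |f s|) ≤ |f (n % N)| := Finset.inf'_le _ hmem
        _ = |f n| := by rw [hmod]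

lemma aux_dominance (s : Finset ℕ) (C B : ℕ → ℝ) (R cL : ℝ)
    (hB0 : ∀ l ∈ s, 0 ≤ B l) (hBR : ∀ l ∈ s, B l < R)
    (hR : 0 < R) (hcL : 0 < cL) :
    ∀ᶠ n in Filter.atTop, (∑ l ∈ s, C l * B l ^ n) < cL * R ^ n := by
  have htend : Filter.Tendsto (fun n : ℕ => ∑ l ∈ s, C l * (B l / R) ^ n)
      Filter.atTop (nhds 0) := by
    have h2 : Filter.Tendsto (fun n : ℕ => ∑ l ∈ s, C l * (B l / R) ^ n)
        Filter.atTop (nhds (∑ l ∈ s, C l * 0)) := by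
      apply tendsto_finset_sum
      intro l hl
      exact (tendsto_pow_atTop_nhds_zero_of_lt_one
        (div_nonneg (hB0 l hl) hR.le) (by rw [div_lt_one hR]; exact hBR l hl)).const_mul _
    simpa using h2
  filter_upwards [htend.eventually_lt_const hcL] with n hn
  have hRn : (0:ℝ) < R ^ n := pow_pos hR n
  calc ∑ l ∈ s, C l * B l ^ n = (∑ l ∈ s, C l * (B l / R) ^ n) * R ^ n := by
        rw [Finset.sum_mul]
        refine Finset.sum_congr rfl fun l hl => ?_
        rw [div_pow, mul_assoc, div_mul_cancel₀ _ (ne_of_gt hRn)]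
    _ < cL * R ^ n := mul_lt_mul_of_pos_right hn hRn

open Complex Real in
lemma aux_lam_form (r : ℕ) (hr : 2 ≤ r) (ξ lam : ℕ → ℂ)
    (hξ : ∀ l : ℕ, ξ l = Complex.exp (Real.pi * Complex.I * l / 2 ^ (r - 1)))
    (hlam : ∀ l : ℕ, lam l = 1 + (ξ l)⁻¹) (l : ℕ) :
    lam l = ((2 * Real.cos (Real.pi * l / 2 ^ r) : ℝ) : ℂ) *
      Complex.exp ((-(Real.pi * l / 2 ^ r) : ℝ) * Complex.I) := by
  have h2 : (2:ℂ) ^ r = 2 ^ (r-1) * 2 := by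
    rw [← pow_succ]; congr 1; omega
  have hx : (Real.pi * Complex.I * l / 2 ^ (r - 1)) =
      2 * ((Real.pi * l / 2 ^ r : ℝ) : ℂ) * Complex.I := by
    push_cast
    rw [h2]
    have h0 : ((2:ℂ) ^ (r-1)) ≠ 0 := by
      apply pow_ne_zero; norm_num
    field_simp
  set x : ℝ := Real.pi * l / 2 ^ r with hxdef
  rw [hlam, hξ, ← Complex.exp_neg, hx]
  have e1 : Complex.exp (-(2 * (x:ℂ) * Complex.I)) =
      Complex.exp ((-x : ℝ) * Complex.I) * Complex.exp ((-x : ℝ) * Complex.I) := by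
    rw [← Complex.exp_add]
    congr 1
    push_cast
    ring
  rw [e1]
  have e2 : (1 : ℂ) = Complex.exp ((x : ℝ) * Complex.I) * Complex.exp ((-x : ℝ) * Complex.I) := by
    rw [← Complex.exp_add]
    rw [show ((x:ℝ):ℂ) * Complex.I + ((-x:ℝ):ℂ) * Complex.I = 0 by push_cast; ring]
    exact Complex.exp_zero.symm
  rw [e2, ← add_mul]
  congr 1
  rw [Complex.exp_mul_I, Complex.exp_mul_I]
  push_cast
  rw [Complex.cos_neg, Complex.sin_neg, ← Complex.ofReal_cos]
  push_cast
  ring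

open Complex in
/-- Let `ξ_l = exp(iπl/2^{r−1})`, `λ_l = 1 + ξ_l⁻¹`, and let
`a_n = d₀·2ⁿ + 2Σ_{l=1}^{2^{r−1}−1} Re(d_l λ_lⁿ)` be a real solution of the standard
recurrence. Then there is an `n₀` such that for all `n > n₀`, `a_n = 0` iff
`t_l(n) = 0` for all `0 ≤ l ≤ 2^{r−1}−1`, where `t₀(n) = d₀·2ⁿ` and
`t_l(n) = Re(d_l λ_lⁿ)` for `l ≥ 1`. -/
theorem eventual_vanishing_characterization
    (r : ℕ) (hr : 2 ≤ r)
    (d₀ : ℝ) (d : ℕ → ℂ) (ξ lam : ℕ → ℂ)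
    (hξ : ∀ l : ℕ, ξ l = Complex.exp (Real.pi * Complex.I * l / 2 ^ (r - 1)))
    (hlam : ∀ l : ℕ, lam l = 1 + (ξ l)⁻¹)
    (a : ℕ → ℝ)
    (ha : ∀ n : ℕ, a n =
      d₀ * 2 ^ n + 2 * ∑ l ∈ Finset.Icc 1 (2 ^ (r - 1) - 1), (d l * lam l ^ n).re) :
    ∃ n₀ : ℕ, ∀ n : ℕ, n₀ < n →
      (a n = 0 ↔
        (d₀ * 2 ^ n = 0 ∧
          ∀ l ∈ Finset.Icc 1 (2 ^ (r - 1) - 1), (d l * lam l ^ n).re = 0)) := by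
  classical
  set M := 2 ^ (r - 1) - 1 with hM
  set N := 2 ^ (r + 1) with hN
  have hNpos : 0 < N := by positivity
  set x : ℕ → ℝ := fun l => Real.pi * l / 2 ^ r with hxdef
  set ρ : ℕ → ℝ := fun l => 2 * Real.cos (x l) with hρdef
  have hΛ : ∀ l, lam l = ((ρ l : ℝ) : ℂ) * Complex.exp ((-(x l) : ℝ) * Complex.I) :=
    fun l => aux_lam_form r hr ξ lam hξ hlam l
  have h2r : (2:ℝ) ^ r = 2 ^ (r-1) * 2 := by
    rw [← pow_succ]; congr 1; omega
  have hxbound : ∀ l ∈ Finset.Icc 1 M, 0 < x l ∧ x l < Real.pi / 2 := by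
    intro l hl
    obtain ⟨hl1, hl2⟩ := Finset.mem_Icc.1 hl
    have hp2 : 0 < 2 ^ (r-1) := pow_pos (by norm_num) (r-1)
    have hlM : (l:ℝ) < 2 ^ (r-1) := by
      have : l < 2 ^ (r-1) := by omega
      exact_mod_cast this
    have hl0 : (0:ℝ) < (l:ℝ) := by exact_mod_cast hl1
    constructor
    · exact div_pos (mul_pos Real.pi_pos hl0) (by positivity)
    · have hcalc : x l < Real.pi * 2 ^ (r-1) / 2 ^ r := by
        simp only [hxdef]
        gcongr
      have heq : Real.pi * 2 ^ (r-1) / 2 ^ r = Real.pi / 2 := by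
        rw [h2r]
        have : ((2:ℝ) ^ (r-1)) ≠ 0 := by positivity
        field_simp
      rw [heq] at hcalc
      exact hcalc
  have hcospos : ∀ l ∈ Finset.Icc 1 M, 0 < Real.cos (x l) := fun l hl =>
    Real.cos_pos_of_mem_Ioo ⟨by linarith [(hxbound l hl).1, Real.pi_pos], (hxbound l hl).2⟩
  have hρpos : ∀ l ∈ Finset.Icc 1 M, 0 < ρ l := by
    intro l hl; simp only [hρdef]; linarith [hcospos l hl]
  have hρlt2 : ∀ l ∈ Finset.Icc 1 M, ρ l < 2 := by
    intro l hl
    obtain ⟨h1, h2⟩ := hxbound l hl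
    have hc : Real.cos (x l) < Real.cos 0 :=
      Real.cos_lt_cos_of_nonneg_of_le_pi le_rfl (by linarith [Real.pi_pos]) h1
    rw [Real.cos_zero] at hc
    simp only [hρdef]; linarith
  have hρmono : ∀ L ∈ Finset.Icc 1 M, ∀ l ∈ Finset.Icc 1 M, L < l → ρ l < ρ L := by
    intro L hL l hl hlt
    have hxlt : x L < x l := by
      have hcast : (L:ℝ) < (l:ℝ) := by exact_mod_cast hlt
      simp only [hxdef]
      gcongr
    have hc : Real.cos (x l) < Real.cos (x L) :=
      Real.cos_lt_cos_of_nonneg_of_le_pi (hxbound L hL).1.le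
        (by linarith [(hxbound l hl).2, Real.pi_pos]) hxlt
    simp only [hρdef]; linarith
  have habs : ∀ l ∈ Finset.Icc 1 M, ‖lam l‖ = ρ l := by
    intro l hl
    rw [hΛ l, norm_mul, Complex.norm_exp_ofReal_mul_I, mul_one, Complex.norm_real, Real.norm_eq_abs,
      abs_of_pos (hρpos l hl)]
  have hub : ∀ l ∈ Finset.Icc 1 M, ∀ n : ℕ,
      |(d l * lam l ^ n).re| ≤ ‖d l‖ * ρ l ^ n := by
    intro l hl n
    calc |(d l * lam l ^ n).re| ≤ ‖d l * lam l ^ n‖ := Complex.abs_re_le_norm _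
      _ = ‖d l‖ * ρ l ^ n := by rw [norm_mul, norm_pow, habs l hl]
  have hpow : ∀ l, lam l ^ N = ((ρ l ^ N : ℝ) : ℂ) := by
    intro l
    rw [hΛ l, mul_pow, ← Complex.exp_nat_mul]
    have harg : (N:ℂ) * ((((-(x l)):ℝ):ℂ) * Complex.I) = (((-(l:ℤ) : ℤ)):ℂ) * (2 * Real.pi * Complex.I) := by
      simp only [hxdef, hN]
      push_cast
      have h2c : (2:ℂ) ^ (r+1) = 2 ^ r * 2 := by rw [pow_succ]
      rw [h2c]
      have h0 : ((2:ℂ) ^ r) ≠ 0 := pow_ne_zero _ (by norm_num)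
      field_simp
    rw [harg, Complex.exp_int_mul_two_pi_mul_I, mul_one]
    push_cast
    ring
  have hper : ∀ l ∈ Finset.Icc 1 M, ∀ n : ℕ,
      (d l * lam l ^ (n + N)).re = ρ l ^ N * (d l * lam l ^ n).re := by
    intro l hl n
    rw [pow_add, hpow l, ← mul_assoc, mul_comm (d l * lam l ^ n) (((ρ l ^ N : ℝ)):ℂ),
      Complex.re_ofReal_mul]
  have hlow : ∀ l ∈ Finset.Icc 1 M, ∃ c : ℝ, 0 < c ∧ ∀ n : ℕ,
      (d l * lam l ^ n).re ≠ 0 → c * ρ l ^ n ≤ |(d l * lam l ^ n).re| := by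
    intro l hl
    have hρl := hρpos l hl
    have hperf : ∀ n : ℕ, (d l * lam l ^ (n + N)).re / ρ l ^ (n + N)
        = (d l * lam l ^ n).re / ρ l ^ n := by
      intro n
      rw [hper l hl n, pow_add]
      have hρn : ρ l ^ n ≠ 0 := pow_ne_zero _ (ne_of_gt hρl)
      have hρN : ρ l ^ N ≠ 0 := pow_ne_zero _ (ne_of_gt hρl)
      field_simp
    obtain ⟨c, hc, hcb⟩ := aux_periodic_lb (fun n => (d l * lam l ^ n).re / ρ l ^ n) N hNpos hperf
    refine ⟨c, hc, fun n hn => ?_⟩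
    have hρn : (0:ℝ) < ρ l ^ n := pow_pos hρl n
    have h1 : (d l * lam l ^ n).re / ρ l ^ n ≠ 0 := div_ne_zero hn (ne_of_gt hρn)
    have h2 := hcb n h1
    rw [abs_div, abs_of_pos hρn] at h2
    exact (le_div_iff₀ hρn).1 h2
  choose! c hcpos hclb using hlow
  -- eventual statement for the dominant d₀-term
  have E0 : ∀ᶠ n in Filter.atTop, d₀ ≠ 0 → a n ≠ 0 := by
    by_cases hd : d₀ = 0
    · exact Filter.Eventually.of_forall (fun n h => absurd hd h)
    · have hev := aux_dominance (Finset.Icc 1 M) (fun l => 2 * ‖d l‖) ρ 2 |d₀|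
        (fun l hl => (hρpos l hl).le) hρlt2 (by norm_num) (abs_pos.2 hd)
      filter_upwards [hev] with n hn
      intro _ han
      rw [ha n] at han
      have hsum : |2 * ∑ l ∈ Finset.Icc 1 M, (d l * lam l ^ n).re|
          ≤ ∑ l ∈ Finset.Icc 1 M, 2 * ‖d l‖ * ρ l ^ n := by
        rw [abs_mul, (by norm_num : |(2:ℝ)| = 2)]
        calc 2 * |∑ l ∈ Finset.Icc 1 M, (d l * lam l ^ n).re|
            ≤ 2 * ∑ l ∈ Finset.Icc 1 M, |(d l * lam l ^ n).re| := by
              have := Finset.abs_sum_le_sum_abs (fun l => (d l * lam l ^ n).re) (Finset.Icc 1 M)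
              linarith
          _ ≤ 2 * ∑ l ∈ Finset.Icc 1 M, ‖d l‖ * ρ l ^ n := by
              have := Finset.sum_le_sum (fun l hl => hub l hl n)
              linarith
          _ = ∑ l ∈ Finset.Icc 1 M, 2 * ‖d l‖ * ρ l ^ n := by
              rw [Finset.mul_sum]
              exact Finset.sum_congr rfl fun l _ => by ring
      have h1 : d₀ * 2 ^ n = -(2 * ∑ l ∈ Finset.Icc 1 M, (d l * lam l ^ n).re) := by
        linarith
      have habs2 : |d₀ * 2 ^ n| = |d₀| * 2 ^ n := by
        rw [abs_mul, abs_of_pos (by positivity : (0:ℝ) < 2 ^ n)]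
      have hcon : |d₀| * 2 ^ n < |d₀| * 2 ^ n := by
        calc |d₀| * 2 ^ n = |d₀ * 2 ^ n| := habs2.symm
          _ = |2 * ∑ l ∈ Finset.Icc 1 M, (d l * lam l ^ n).re| := by rw [h1, abs_neg]
          _ ≤ ∑ l ∈ Finset.Icc 1 M, 2 * ‖d l‖ * ρ l ^ n := hsum
          _ < |d₀| * 2 ^ n := hn
      exact lt_irrefl _ hcon
  -- eventual statement for each dominant index L ≥ 1
  have EL : ∀ L ∈ Finset.Icc 1 M, ∀ᶠ n in Filter.atTop,
      (d₀ * 2 ^ n = 0 ∧ (d L * lam L ^ n).re ≠ 0 ∧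
        ∀ l ∈ Finset.Icc 1 M, l < L → (d l * lam l ^ n).re = 0) → a n ≠ 0 := by
    intro L hL
    have hev := aux_dominance ((Finset.Icc 1 M).filter (fun l => L < l))
      (fun l => ‖d l‖) ρ (ρ L) (c L)
      (fun l hl => (hρpos l (Finset.mem_filter.1 hl).1).le)
      (fun l hl => hρmono L hL l (Finset.mem_filter.1 hl).1 (Finset.mem_filter.1 hl).2)
      (hρpos L hL) (hcpos L hL)
    filter_upwards [hev] with n hn
    rintro ⟨h0, hTL, hsmall⟩ han
    rw [ha n, h0, zero_add] at han
    have hSig : ∑ l ∈ Finset.Icc 1 M, (d l * lam l ^ n).re = 0 := by linarith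
    have hsplit := Finset.add_sum_erase (Finset.Icc 1 M)
      (fun l => (d l * lam l ^ n).re) hL
    have hb1 : |∑ l ∈ (Finset.Icc 1 M).erase L, (d l * lam l ^ n).re|
        ≤ ∑ l ∈ (Finset.Icc 1 M).erase L,
          (if L < l then ‖d l‖ * ρ l ^ n else 0) := by
      refine (Finset.abs_sum_le_sum_abs _ _).trans (Finset.sum_le_sum ?_)
      intro l hl'
      obtain ⟨hne, hlm⟩ := Finset.mem_erase.1 hl'
      rcases lt_trichotomy l L with h | h | h
      · rw [hsmall l hlm h, if_neg (by omega : ¬ L < l)]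
        simp
      · exact absurd h hne
      · rw [if_pos h]; exact hub l hlm n
    have hb2 : ∑ l ∈ (Finset.Icc 1 M).erase L,
        (if L < l then ‖d l‖ * ρ l ^ n else 0)
        = ∑ l ∈ (Finset.Icc 1 M).filter (fun l => L < l),
          ‖d l‖ * ρ l ^ n := by
      rw [Finset.sum_erase _ (by simp), Finset.sum_filter]
    have hlb := hclb L hL n hTL
    have heq : (d L * lam L ^ n).re
        = - ∑ l ∈ (Finset.Icc 1 M).erase L, (d l * lam l ^ n).re := by
      linarith
    have hfin : |(d L * lam L ^ n).re|
        ≤ ∑ l ∈ (Finset.Icc 1 M).filter (fun l => L < l), ‖d l‖ * ρ l ^ n := by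
      rw [heq, abs_neg]
      exact hb1.trans (le_of_eq hb2)
    linarith
  -- combine
  have Eall := E0.and ((Filter.eventually_all_finset (Finset.Icc 1 M)).2 EL)
  obtain ⟨n₀, hn₀⟩ := Filter.eventually_atTop.1 Eall
  refine ⟨n₀, fun n hn => ?_⟩
  obtain ⟨hE0, hEL⟩ := hn₀ n hn.le
  constructor
  · intro han
    by_contra hcon
    by_cases h0 : d₀ * 2 ^ n = 0
    · have hexists : ∃ l ∈ Finset.Icc 1 M, (d l * lam l ^ n).re ≠ 0 := by
        by_contra hno
        push_neg at hno
        exact hcon ⟨h0, hno⟩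
      obtain ⟨l₁, hl₁, ht₁⟩ := hexists
      set S := (Finset.Icc 1 M).filter (fun l => (d l * lam l ^ n).re ≠ 0) with hSdef
      have hSne : S.Nonempty := ⟨l₁, Finset.mem_filter.2 ⟨hl₁, ht₁⟩⟩
      set L := S.min' hSne with hLdef
      have hLS : L ∈ S := S.min'_mem hSne
      obtain ⟨hLm, hLt⟩ := Finset.mem_filter.1 hLS
      have hmin : ∀ l ∈ Finset.Icc 1 M, l < L → (d l * lam l ^ n).re = 0 := by
        intro l hlm hlt
        by_contra hne
        have := S.min'_le l (Finset.mem_filter.2 ⟨hlm, hne⟩)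
        omega
      exact (hEL L hLm ⟨h0, hLt, hmin⟩) han
    · have hd : d₀ ≠ 0 := fun h => h0 (by rw [h]; ring)
      exact hE0 hd han
  · rintro ⟨h0, hall⟩
    rw [ha n, h0, Finset.sum_eq_zero hall]
    ring
end

section
/- Let k ≥ 1 and j ≥ 1 be integers and let F : 𝔽₂ʲ → 𝔽₂ be a Boolean function. Define δ_l = Σ_{m=0}^{j} C_m(F)·(-1)^{C(l+m,k)} for l ≥ 0, so that S(σ_{n+j,k} + F) = Σ_{l=0}^{n} δ_l·C(n,l). Then there exists an integer n₀ such that for every n > n₀: Σ_{l=0}^{n} δ_l·C(n,l) = 0 if and only if there exists an integer z such that δ_a + δ_{n−a} = (-1)^{a−1}·z for all 0 ≤ a ≤ n. Moreover, in that case, if n is odd then necessarily z = 0, i.e. δ_{n−a} = −δ_a for all 0 ≤ a ≤ n. -/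
open Finset Complex

/-- Exponential sum of a Boolean function in `N` variables. -/
def expSum {N : ℕ} (G : (Fin N → ZMod 2) → ZMod 2) : ℤ :=
  ∑ x : Fin N → ZMod 2, (-1 : ℤ) ^ (G x).val

/-- Hamming weight of a Boolean vector. -/
def wt {j : ℕ} (x : Fin j → ZMod 2) : ℕ :=
  (Finset.univ.filter (fun i => x i = 1)).card

/-- The weight-coefficients `C_m(F) = Σ_{wt(x)=m} (-1)^{F(x)}` of a Boolean function. -/
def coefC {j : ℕ} (F : (Fin j → ZMod 2) → ZMod 2) (m : ℕ) : ℤ :=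
  ∑ x ∈ Finset.univ.filter (fun x : Fin j → ZMod 2 => wt x = m), (-1 : ℤ) ^ (F x).val

private lemma neg_one_pow_congr' {a b : ℕ} (h : a % 2 = b % 2) : ((-1:ℤ))^a = (-1)^b := by
  rcases Nat.even_or_odd a with ha | ha
  · have hb : Even b := by
      rcases Nat.even_or_odd b with hb | hb
      · exact hb
      · exfalso; rw [Nat.even_iff] at ha; rw [Nat.odd_iff] at hb; omega
    rw [ha.neg_one_pow, hb.neg_one_pow]
  · have hb : Odd b := by
      rcases Nat.even_or_odd b with hb | hb
      · exfalso; rw [Nat.odd_iff] at ha; rw [Nat.even_iff] at hb; omega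
      · exact hb
    rw [ha.neg_one_pow, hb.neg_one_pow]

private lemma choose_add_pow_two_mod (k N r : ℕ) (hr : r < 2^k) :
    ((N + 2^k).choose r) % 2 = (N.choose r) % 2 := by
  have h2 : ((N + 2^k).choose r : ZMod 2) = ((N.choose r : ℕ) : ZMod 2) := by
    rw [add_comm, Nat.add_choose_eq]
    push_cast
    rw [Finset.sum_eq_single ((0 : ℕ), r)]
    · simp
    · rintro ⟨i, j⟩ hij hne
      rw [Finset.HasAntidiagonal.mem_antidiagonal] at hij
      have hi0 : i ≠ 0 := by
        rintro rfl
        exact hne (by simp at hij ⊢; omega)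
      have hine : i ≠ 2^k := by omega
      have : ((2^k).choose i : ZMod 2) = 0 := by
        rw [ZMod.natCast_eq_zero_iff]
        exact Nat.Prime.dvd_choose_pow Nat.prime_two hi0 hine
      simp [this]
    · intro h
      exact absurd (by simp [Finset.HasAntidiagonal.mem_antidiagonal]) h
  rwa [ZMod.natCast_eq_natCast_iff'] at h2


private lemma key_lemma (Q : ℕ) (hQ : 1 ≤ Q) (δ : ℕ → ℤ)
    (hper : ∀ l, δ (l + 2 * Q) = δ l) :
    ∃ n₀ : ℕ, 1 ≤ n₀ ∧ ∀ n : ℕ, n₀ < n →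
      (∑ l ∈ Finset.range (n + 1), δ l * (n.choose l : ℤ) = 0) →
      ∀ a : ℕ, a ≤ n → δ a + δ (n - a) = (-1 : ℤ) ^ a * (δ 0 + δ n) := by
  set P := 2 * Q with hPdef
  have hP0 : 0 < P := by omega
  -- periodicity mod P
  have hmod : ∀ l : ℕ, δ l = δ (l % P) := by
    have haux : ∀ q r : ℕ, δ (r + P * q) = δ r := by
      intro q
      induction q with
      | zero => simp
      | succ q ih =>
        intro r
        have : r + P * (q + 1) = (r + P * q) + P := by ring
        rw [this, hper, ih]
    intro l
    conv_lhs => rw [← Nat.mod_add_div l P]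
    exact haux (l / P) (l % P)
  -- root of unity setup
  set θ : ℝ := Real.pi / Q with hθdef
  have hθpos : 0 < θ := by positivity
  set ζ : ℂ := Complex.exp (2 * Real.pi * Complex.I / P) with hζdef
  have hprim : IsPrimitiveRoot ζ P := Complex.isPrimitiveRoot_exp P hP0.ne'
  have hζ0 : ζ ≠ 0 := Complex.exp_ne_zero _
  have hζP : ζ ^ (P : ℤ) = 1 := hprim.zpow_eq_one
  have hPmul : ∀ d : ℤ, ζ ^ ((P : ℤ) * d) = 1 := by
    intro d; rw [zpow_mul, hζP, one_zpow]
  have hexp : ∀ x y : ℤ, ζ ^ (x + (P:ℤ) * y) = ζ ^ x := by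
    intro x y; rw [zpow_add₀ hζ0, hPmul, mul_one]
  have hζθ : ζ = Complex.exp ((θ:ℝ) * Complex.I) := by
    rw [hζdef, hθdef, hPdef]
    congr 1
    have hQC : (Q:ℂ) ≠ 0 := Nat.cast_ne_zero.mpr (by omega)
    push_cast
    field_simp
  have hζabs : ‖ζ‖ = 1 := by
    rw [hζθ]; exact Complex.norm_exp_ofReal_mul_I θ
  have habs1 : ∀ x : ℤ, ‖ζ ^ x‖ = 1 := by
    intro x
    rw [norm_zpow ζ x, hζabs, one_zpow]
  have zsum : ∀ d : ℤ, ∑ u ∈ range P, ζ ^ ((u : ℤ) * d) = if (P:ℤ) ∣ d then (P:ℂ) else 0 := by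
    intro d
    by_cases h : (P:ℤ) ∣ d
    · obtain ⟨e, rfl⟩ := h
      rw [if_pos ⟨e, rfl⟩]
      have : ∀ u ∈ range P, ζ ^ ((u:ℤ) * ((P:ℤ) * e)) = 1 := by
        intro u _
        rw [show (u:ℤ) * ((P:ℤ)*e) = (P:ℤ) * (e * u) by ring, hPmul]
      rw [Finset.sum_congr rfl this]
      simp
    · rw [if_neg h]
      have hx : ζ ^ d ≠ 1 := fun hh => h ((hprim.zpow_eq_one_iff_dvd d).1 hh)
      have hrw : ∀ u ∈ range P, ζ ^ ((u:ℤ) * d) = (ζ ^ d) ^ u := by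
        intro u _
        rw [mul_comm, zpow_mul, zpow_natCast]
      rw [Finset.sum_congr rfl hrw, geom_sum_eq hx]
      have : (ζ ^ d) ^ P = 1 := by
        rw [← zpow_natCast (ζ ^ d) P, ← zpow_mul, mul_comm, hPmul]
      rw [this]
      simp
  -- the magnitudes
  have hζpow : ∀ u : ℕ, ζ ^ (u:ℤ) = Complex.exp (((u * θ : ℝ)) * Complex.I) := by
    intro u
    rw [zpow_natCast, hζθ, ← Complex.exp_nat_mul]
    congr 1
    push_cast
    ring
  set lam : ℕ → ℝ := fun u => ‖1 + ζ ^ (u:ℤ)‖ with hlamdef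
  have lam_nonneg : ∀ u, 0 ≤ lam u := fun u => norm_nonneg _
  have lam_sq : ∀ u : ℕ, (lam u)^2 = 2 + 2 * Real.cos (u * θ) := by
    intro u
    have h1 : (lam u)^2 = Complex.normSq (1 + ζ ^ (u:ℤ)) := by
      rw [hlamdef]; exact Complex.sq_norm _
    rw [h1, hζpow u, Complex.normSq_apply, Complex.add_re, Complex.add_im, Complex.one_re,
      Complex.one_im, Complex.exp_ofReal_mul_I_re, Complex.exp_ofReal_mul_I_im]
    nlinarith [Real.sin_sq_add_cos_sq ((u:ℝ) * θ)]
  have lam_anti : ∀ u v : ℕ, u < v → v ≤ Q → lam v < lam u := by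
    intro u v huv hv
    have h1 : Real.cos (v * θ) < Real.cos (u * θ) := by
      apply Real.cos_lt_cos_of_nonneg_of_le_pi
      · positivity
      · have hQR : (0:ℝ) < Q := by exact_mod_cast hQ
        rw [hθdef]
        calc (v:ℝ) * (Real.pi / Q) ≤ Q * (Real.pi / Q) := by
              apply mul_le_mul_of_nonneg_right _ (by positivity)
              exact_mod_cast hv
          _ = Real.pi := by field_simp
      · have : (u:ℝ) < v := by exact_mod_cast huv
        nlinarith
    nlinarith [lam_sq u, lam_sq v, lam_nonneg u, lam_nonneg v]
  have hζQ : ζ ^ (Q:ℤ) = -1 := by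
    rw [hζpow Q]
    have hQR : (0:ℝ) < Q := by exact_mod_cast hQ
    have : (Q:ℝ) * θ = Real.pi := by
      rw [hθdef]; field_simp
    rw [this]
    exact_mod_cast Complex.exp_pi_mul_I
  have lam_half : lam Q = 0 := by
    rw [hlamdef]; simp only [hζQ]; simp
  have lam_pos : ∀ u, u < Q → 0 < lam u := by
    intro u hu
    have := lam_anti u Q hu le_rfl
    rw [lam_half] at this
    linarith
  have lam_mono : ∀ a b : ℕ, a ≤ b → b ≤ Q → lam b ≤ lam a := by
    intro a b hab hb
    rcases Nat.lt_or_ge a b with h | h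
    · exact (lam_anti a b h hb).le
    · have : a = b := by omega
      rw [this]
  -- symmetry of the magnitudes
  have habs_sym : ∀ w : ℕ, w ≤ P → ‖1 + ζ ^ (w:ℤ)‖ = ‖1 + ζ ^ ((P - w : ℕ) : ℤ)‖ := by
    intro w hw
    have h1 : ζ ^ ((P - w : ℕ) : ℤ) * (1 + ζ ^ (w:ℤ)) = 1 + ζ ^ ((P - w : ℕ) : ℤ) := by
      rw [mul_add, mul_one, ← zpow_add₀ hζ0]
      have : ((P - w : ℕ) : ℤ) + (w : ℤ) = (P:ℤ) := by
        push_cast; omega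
      rw [this, hζP]
      ring
    calc ‖1 + ζ ^ (w:ℤ)‖
        = ‖ζ ^ ((P - w : ℕ) : ℤ)‖ * ‖1 + ζ ^ (w:ℤ)‖ := by
          rw [habs1]; ring
      _ = ‖1 + ζ ^ ((P - w : ℕ) : ℤ)‖ := by rw [← norm_mul, h1]
  -- the DFT coefficients
  set D : ℤ → ℂ := fun u => ∑ b ∈ range P, (δ b : ℂ) * ζ ^ (-(u * b)) with hDdef
  have Dper : ∀ u : ℤ, D (u + P) = D u := by
    intro u
    apply Finset.sum_congr rfl
    intro b _
    rw [show -((u + (P:ℤ)) * b) = -(u * b) + (P:ℤ) * (-b) by ring, hexp]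
  have Dbound : ∀ u : ℤ, ‖D u‖ ≤ ∑ b ∈ range P, (|δ b| : ℝ) := by
    intro u
    refine le_trans (norm_sum_le _ _) (Finset.sum_le_sum ?_)
    intro b _
    rw [norm_mul, habs1, mul_one, Complex.norm_intCast]
  set M : ℝ := ∑ b ∈ range P, (|δ b| : ℝ) with hMdef
  have hM0 : 0 ≤ M := Finset.sum_nonneg fun b _ => abs_nonneg _
  -- residue-dependent coefficients
  set Gr : ℕ → ℕ → ℂ := fun r u => D u + ζ ^ (-(u * r : ℤ)) * D (-(u:ℤ)) with hGrdef
  set εset := (Finset.range P ×ˢ Finset.range Q).filter (fun p => Gr p.1 p.2 ≠ 0) with hεsetdef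
  set ε : ℝ := if h : εset.Nonempty then εset.inf' h (fun p => ‖Gr p.1 p.2‖) else 1
    with hεdef
  have hεpos : 0 < ε := by
    rw [hεdef]
    split_ifs with h
    · rw [Finset.lt_inf'_iff]
      intro p hp
      rw [hεsetdef, Finset.mem_filter] at hp
      exact norm_pos_iff.mpr hp.2
    · norm_num
  have hεle : ∀ r u : ℕ, r < P → u < Q → Gr r u ≠ 0 → ε ≤ ‖Gr r u‖ := by
    intro r u hr hu hne
    have hmem : (r, u) ∈ εset := by
      rw [hεsetdef, Finset.mem_filter]
      exact ⟨Finset.mem_product.2 ⟨Finset.mem_range.2 hr, Finset.mem_range.2 hu⟩, hne⟩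
    rw [hεdef, dif_pos ⟨(r,u), hmem⟩]
    exact Finset.inf'_le _ hmem
  -- choice of n₀
  have hN : ∀ u : ℕ, ∃ N : ℕ, u < Q → ∀ n : ℕ, N ≤ n →
      (P:ℝ) * (2 * M) * lam (u+1) ^ n < ε * lam u ^ n := by
    intro u
    by_cases hu : u < Q
    swap
    · exact ⟨0, fun h => absurd h hu⟩
    have hlu : 0 < lam u := lam_pos u hu
    have hratio1 : lam (u+1) / lam u < 1 := by
      rw [div_lt_one hlu]
      exact lam_anti u (u+1) (by omega) (by omega)
    have hratio0 : 0 ≤ lam (u+1) / lam u := div_nonneg (lam_nonneg _) hlu.le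
    have htend : Filter.Tendsto (fun n : ℕ => (P:ℝ) * (2*M) * (lam (u+1) / lam u) ^ n)
        Filter.atTop (nhds ((P:ℝ) * (2*M) * 0)) :=
      Filter.Tendsto.const_mul _ (tendsto_pow_atTop_nhds_zero_of_lt_one hratio0 hratio1)
    have hev : ∀ᶠ n in Filter.atTop, (P:ℝ) * (2*M) * (lam (u+1)/lam u) ^ n < ε := by
      apply Filter.Tendsto.eventually_lt_const _ htend
      rw [mul_zero]
      exact hεpos
    obtain ⟨N, hN⟩ := Filter.eventually_atTop.1 hev
    refine ⟨N, fun _ n hn => ?_⟩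
    have h1 := hN n hn
    have h2 : (lam (u+1)/lam u) ^ n * lam u ^ n = lam (u+1) ^ n := by
      rw [div_pow, div_mul_cancel₀]
      exact pow_ne_zero _ hlu.ne'
    have h3 : 0 < lam u ^ n := pow_pos hlu n
    calc (P:ℝ) * (2*M) * lam (u+1) ^ n = ((P:ℝ) * (2*M) * (lam (u+1)/lam u) ^ n) * lam u ^ n := by
          rw [← h2]; ring
      _ < ε * lam u ^ n := by
          exact mul_lt_mul_of_pos_right h1 h3
  choose Nf hNf using hN
  refine ⟨P + 1 + (Finset.range Q).sup Nf, by omega, ?_⟩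
  intro n hn hS
  have hn1 : 1 ≤ n := by omega
  have hPC : (P:ℂ) ≠ 0 := Nat.cast_ne_zero.2 hP0.ne'
  -- the picking lemma
  have pick : ∀ c : ℕ, ∑ b ∈ range P, (δ b : ℂ) * (if (P:ℤ) ∣ ((c:ℤ) - (b:ℤ)) then (P:ℂ) else 0)
      = (P:ℂ) * (δ (c % P) : ℂ) := by
    intro c
    rw [Finset.sum_eq_single (c % P)]
    · rw [if_pos, mul_comm]
      refine ⟨((c / P : ℕ) : ℤ), ?_⟩
      have h := congrArg (Nat.cast : ℕ → ℤ) (Nat.mod_add_div c P)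
      push_cast at h ⊢
      linarith
    · intro b hb hbne
      rw [mem_range] at hb
      rw [if_neg, mul_zero]
      intro hdvd
      have h1 : (b:ℤ) % (P:ℤ) = (c:ℤ) % (P:ℤ) := Int.modEq_iff_dvd.mpr hdvd
      have h2 : b % P = c % P := by
        have hb' : ((b % P : ℕ) : ℤ) = ((c % P : ℕ) : ℤ) := by push_cast; exact h1
        exact_mod_cast hb'
      exact hbne (by rw [← Nat.mod_eq_of_lt hb, h2])
    · intro h
      exact absurd (mem_range.2 (Nat.mod_lt _ hP0)) h
  -- T and G
  set T : ℕ → ℂ := fun u => (1 + ζ ^ (u:ℤ)) ^ n with hTdef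
  set G : ℕ → ℂ := fun u => D (u:ℤ) + ζ ^ (-((u:ℤ) * (n:ℤ))) * D (-(u:ℤ)) with hGdef
  have hGGr : ∀ u : ℕ, G u = Gr (n % P) u := by
    intro u
    rw [hGdef, hGrdef]
    simp only
    congr 2
    have hnpm : (n:ℤ) = (P:ℤ) * ((n / P : ℕ) : ℤ) + ((n % P : ℕ) : ℤ) := by
      have h := congrArg (Nat.cast : ℕ → ℤ) (Nat.div_add_mod n P)
      push_cast at h ⊢
      linarith
    rw [show -((u:ℤ) * (n:ℤ)) = -((u:ℤ) * ((n % P : ℕ):ℤ)) + (P:ℤ) * (-((u:ℤ) * ((n / P : ℕ):ℤ)))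
      from by linear_combination (-(u:ℤ)) * hnpm, hexp]
  -- binomial expansion
  have hT : ∀ u : ℕ, T u = ∑ l ∈ range (n+1), ζ ^ ((u:ℤ) * (l:ℤ)) * (n.choose l : ℂ) := by
    intro u
    rw [hTdef]
    simp only
    rw [add_comm (1:ℂ) (ζ ^ (u:ℤ)), add_pow]
    refine Finset.sum_congr rfl fun l _ => ?_
    rw [one_pow, mul_one, ← zpow_natCast (ζ ^ ((u:ℤ))) l, ← zpow_mul]
  -- Step A : ∑ D u T u = 0
  have hSC : ∑ l ∈ range (n+1), (δ (l % P) : ℂ) * (n.choose l : ℂ) = 0 := by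
    have : ∑ l ∈ range (n+1), (δ l : ℂ) * (n.choose l : ℂ) = 0 := by
      exact_mod_cast congrArg (fun z : ℤ => (z : ℂ)) hS
    rw [← this]
    exact Finset.sum_congr rfl fun l _ => by rw [← hmod l]
  have hA : ∑ u ∈ range P, D (u:ℤ) * T u = 0 := by
    have h1 : ∑ u ∈ range P, D (u:ℤ) * T u
        = ∑ u ∈ range P, ∑ b ∈ range P, ∑ l ∈ range (n+1),
          ((δ b : ℂ) * (n.choose l : ℂ)) * ζ ^ ((u:ℤ) * ((l:ℤ) - (b:ℤ))) := by
      refine Finset.sum_congr rfl fun u _ => ?_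
      rw [hT u, hDdef]
      simp only
      rw [Finset.sum_mul_sum]
      refine Finset.sum_congr rfl fun b _ => Finset.sum_congr rfl fun l _ => ?_
      calc (δ b : ℂ) * ζ ^ (-((u:ℤ) * (b:ℤ))) * (ζ ^ ((u:ℤ) * (l:ℤ)) * (n.choose l : ℂ))
          = ((δ b : ℂ) * (n.choose l : ℂ)) * (ζ ^ (-((u:ℤ) * (b:ℤ))) * ζ ^ ((u:ℤ) * (l:ℤ))) := by
            ring
        _ = ((δ b : ℂ) * (n.choose l : ℂ)) * ζ ^ ((u:ℤ) * ((l:ℤ) - (b:ℤ))) := by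
            rw [← zpow_add₀ hζ0]
            congr 1
            ring
    rw [h1, Finset.sum_comm]
    have h2 : ∀ b ∈ range P, ∑ u ∈ range P, ∑ l ∈ range (n+1),
        ((δ b : ℂ) * (n.choose l : ℂ)) * ζ ^ ((u:ℤ) * ((l:ℤ) - (b:ℤ)))
        = ∑ l ∈ range (n+1), (n.choose l : ℂ) *
            ((δ b : ℂ) * (if (P:ℤ) ∣ ((l:ℤ) - (b:ℤ)) then (P:ℂ) else 0)) := by
      intro b _
      rw [Finset.sum_comm]
      refine Finset.sum_congr rfl fun l _ => ?_
      rw [← zsum ((l:ℤ) - (b:ℤ)), Finset.mul_sum, Finset.mul_sum]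
      exact Finset.sum_congr rfl fun u _ => by ring
    rw [Finset.sum_congr rfl h2, Finset.sum_comm]
    have h3 : ∀ l ∈ range (n+1), ∑ b ∈ range P, (n.choose l : ℂ) *
        ((δ b : ℂ) * (if (P:ℤ) ∣ ((l:ℤ) - (b:ℤ)) then (P:ℂ) else 0))
        = (P:ℂ) * ((δ (l % P) : ℂ) * (n.choose l : ℂ)) := by
      intro l _
      rw [← Finset.mul_sum, pick l]
      ring
    rw [Finset.sum_congr rfl h3, ← Finset.mul_sum, hSC, mul_zero]
  -- reflection lemma
  have hrefl : ∀ h : ℤ → ℂ, (∀ x : ℤ, h (x + (P:ℤ)) = h x) →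
      ∑ u ∈ range P, h (-(u:ℤ)) = ∑ u ∈ range P, h (u:ℤ) := by
    intro h hh
    have e1 : ∀ u ∈ range P, h (-(u:ℤ)) = h ((P - u : ℕ) : ℤ) := by
      intro u hu
      rw [mem_range] at hu
      have he : ((P - u : ℕ) : ℤ) = -(u:ℤ) + (P:ℤ) := by push_cast; omega
      rw [he, hh]
    rw [Finset.sum_congr rfl e1]
    have e2 : ∑ u ∈ range P, h ((P - u : ℕ) : ℤ) = ∑ u ∈ range P, h ((u + 1 : ℕ) : ℤ) := by
      rw [← Finset.sum_range_reflect (fun j => h ((j + 1 : ℕ) : ℤ)) P]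
      refine Finset.sum_congr rfl fun u hu => ?_
      rw [mem_range] at hu
      congr 2
      omega
    rw [e2]
    have e3 := Finset.sum_range_succ' (fun j : ℕ => h (j:ℤ)) P
    have e4 := Finset.sum_range_succ (fun j : ℕ => h (j:ℤ)) P
    have e5 : h ((P:ℕ):ℤ) = h 0 := by
      have := hh 0
      rwa [zero_add] at this
    have e6 : ∀ j : ℕ, ((j + 1 : ℕ) : ℤ) = ((j:ℤ) + 1) := by intro j; push_cast; ring
    calc ∑ u ∈ range P, h ((u + 1 : ℕ) : ℤ) = ∑ u ∈ range P, h ((u:ℤ) + 1) := by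
          refine Finset.sum_congr rfl fun u _ => by rw [e6]
      _ = ∑ u ∈ range P, h (u:ℤ) := by
          have := e3.symm.trans e4
          -- ∑ h (i+1) + h 0 = ∑ h i + h P
          push_cast at this
          linear_combination this + e5
  -- Step B : ∑ G u T u = 0
  have hper' : ∀ x : ℤ, D (x + (P:ℤ)) * (1 + ζ ^ (x + (P:ℤ)))^n = D x * (1 + ζ ^ x)^n := by
    intro x
    rw [Dper, show x + (P:ℤ) = x + (P:ℤ) * 1 by ring, hexp]
  have hzneg : ∀ u : ℕ, (1 + ζ ^ (-(u:ℤ)))^n = ζ ^ (-((u:ℤ) * (n:ℤ))) * (1 + ζ ^ ((u:ℤ)))^n := by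
    intro u
    have h1 : 1 + ζ ^ (-(u:ℤ)) = ζ ^ (-(u:ℤ)) * (1 + ζ ^ ((u:ℤ))) := by
      rw [mul_add, mul_one, ← zpow_add₀ hζ0, neg_add_cancel, zpow_zero]
      ring
    rw [h1, mul_pow, ← zpow_natCast (ζ ^ (-(u:ℤ))) n, ← zpow_mul]
    congr 2
    ring
  have hB : ∑ u ∈ range P, G u * T u = 0 := by
    have h2 : ∀ u ∈ range P, G u * T u
        = D (u:ℤ) * T u + (fun v : ℤ => D v * (1 + ζ ^ v)^n) (-(u:ℤ)) := by
      intro u _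
      rw [hGdef, hTdef]
      simp only
      rw [hzneg u]
      ring
    rw [Finset.sum_congr rfl h2, Finset.sum_add_distrib, hA,
      hrefl (fun v : ℤ => D v * (1 + ζ ^ v)^n) (fun x => hper' x)]
    have : ∑ u ∈ range P, (fun v : ℤ => D v * (1 + ζ ^ v)^n) (u:ℤ) = ∑ u ∈ range P, D (u:ℤ) * T u := by
      refine Finset.sum_congr rfl fun u _ => ?_
      rw [hTdef]
    rw [this, hA]
    ring
  -- the flip identity
  have hGw_eq : ∀ w : ℕ, 0 < w → w < P → G w = ζ ^ (-((w:ℤ) * (n:ℤ))) * G (P - w) := by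
    intro w hw0 hwP
    have hv : (w:ℤ) = -(((P - w : ℕ)):ℤ) + (P:ℤ) := by push_cast; omega
    have hDw : D (w:ℤ) = D (-(((P - w : ℕ)):ℤ)) := by rw [hv, Dper]
    have hDnw : D (-(w:ℤ)) = D (((P - w : ℕ)):ℤ) := by
      have h2 : (((P - w : ℕ)):ℤ) = -(w:ℤ) + (P:ℤ) := by push_cast; omega
      rw [h2, Dper]
    rw [hGdef]
    simp only
    rw [hDw, hDnw, mul_add, add_comm]
    congr 1
    rw [← mul_assoc, ← zpow_add₀ hζ0]
    have hsum : ((w:ℤ)) + ((P - w : ℕ):ℤ) = (P:ℤ) := by push_cast; omega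
    rw [show -((w:ℤ) * (n:ℤ)) + -(((P - w:ℕ):ℤ) * (n:ℤ)) = (P:ℤ) * (-(n:ℤ))
      from by linear_combination (-(n:ℤ)) * hsum, hPmul, one_mul]
  -- Step C : strong induction, G u = 0 for u < Q
  have hCc : ∀ u : ℕ, u < Q → G u = 0 := by
    intro u
    induction u using Nat.strong_induction_on with
    | _ u ih =>
    intro hu
    by_contra hne
    have hrP : n % P < P := Nat.mod_lt _ hP0
    have hGε : ε ≤ ‖G u‖ := by
      rw [hGGr u]
      exact hεle _ _ hrP hu (by rw [← hGGr u]; exact hne)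
    have hzero : ∀ w : ℕ, w < u → G w = 0 := fun w hw => ih w hw (by omega)
    have hzero' : ∀ w : ℕ, P - u < w → w < P → G w = 0 := by
      intro w hw hwP
      rw [hGw_eq w (by omega) hwP, hzero (P - w) (by omega), mul_zero]
    have hB0 : (0:ℝ) ≤ 2 * M * lam (u+1) ^ n :=
      mul_nonneg (mul_nonneg (by norm_num) hM0) (pow_nonneg (lam_nonneg _) n)
    have hbound : ∀ w : ℕ, w < P → w ≠ u → w ≠ P - u →
        ‖G w * T w‖ ≤ 2 * M * lam (u+1) ^ n := by
      intro w hwP hwu hwPu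
      by_cases hGw : G w = 0
      · rw [hGw, zero_mul, norm_zero]
        exact hB0
      · have hw1 : u < w := by
          rcases Nat.lt_or_ge w u with h | h
          · exact absurd (hzero w h) hGw
          · omega
        have hw2 : w < P - u := by
          rcases Nat.lt_or_ge (P - u) w with h | h
          · exact absurd (hzero' w h hwP) hGw
          · omega
        have hm1 : u + 1 ≤ min w (P - w) := by omega
        have hm2 : min w (P - w) ≤ Q := by omega
        have habsT : ‖1 + ζ ^ (w:ℤ)‖ = lam (min w (P - w)) := by
          rcases Nat.le_total w (P - w) with h | h
          · rw [Nat.min_eq_left h, hlamdef]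
          · rw [Nat.min_eq_right h, hlamdef]
            simp only
            exact habs_sym w (by omega)
        have hTabs : ‖G w * T w‖ = ‖G w‖ * lam (min w (P - w)) ^ n := by
          rw [norm_mul, hTdef]
          simp only
          rw [norm_pow, habsT]
        rw [hTabs]
        have hGwb : ‖G w‖ ≤ 2 * M := by
          rw [hGdef]
          simp only
          calc ‖D (w:ℤ) + ζ ^ (-((w:ℤ) * (n:ℤ))) * D (-(w:ℤ))‖
              ≤ ‖D (w:ℤ)‖ + ‖ζ ^ (-((w:ℤ) * (n:ℤ))) * D (-(w:ℤ))‖ :=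
                norm_add_le _ _
            _ = ‖D (w:ℤ)‖ + ‖D (-(w:ℤ))‖ := by
                rw [norm_mul, habs1, one_mul]
            _ ≤ M + M := add_le_add (Dbound _) (Dbound _)
            _ = 2 * M := by ring
        have hlm : lam (min w (P - w)) ^ n ≤ lam (u+1) ^ n :=
          pow_le_pow_left₀ (lam_nonneg _) (lam_mono (u+1) _ hm1 hm2) n
        exact mul_le_mul hGwb hlm (pow_nonneg (lam_nonneg _) n) (mul_nonneg (by norm_num) hM0)
    -- split the vanishing sum
    have hPcard : ∀ s : Finset ℕ, s ⊆ range P → (∀ w ∈ s, w ≠ u) → (∀ w ∈ s, w ≠ P - u) →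
        ‖∑ w ∈ s, G w * T w‖ ≤ (P:ℝ) * (2 * M * lam (u+1) ^ n) := by
      intro s hs hsu hsPu
      have hc : (s.card : ℝ) ≤ (P : ℝ) := by
        have := Finset.card_le_card hs
        rw [Finset.card_range] at this
        exact_mod_cast this
      calc ‖∑ w ∈ s, G w * T w‖ ≤ ∑ w ∈ s, ‖G w * T w‖ :=
            norm_sum_le _ _
        _ ≤ ∑ _w ∈ s, (2 * M * lam (u+1) ^ n) :=
            Finset.sum_le_sum fun w hw => hbound w (mem_range.1 (hs hw)) (hsu w hw) (hsPu w hw)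
        _ = (s.card : ℝ) * (2 * M * lam (u+1) ^ n) := by
            rw [Finset.sum_const, nsmul_eq_mul]
        _ ≤ (P:ℝ) * (2 * M * lam (u+1) ^ n) :=
            mul_le_mul_of_nonneg_right hc hB0
    have hfu : ‖G u * T u‖ ≤ (P:ℝ) * (2 * M * lam (u+1) ^ n) := by
      rcases Nat.eq_zero_or_pos u with hu0 | hu0
      · subst hu0
        have hmem : (0:ℕ) ∈ range P := mem_range.2 hP0
        have hsplit := Finset.add_sum_erase (range P) (fun w => G w * T w) hmem
        have heq : G 0 * T 0 = -∑ w ∈ (range P).erase 0, G w * T w := by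
          rw [hB] at hsplit
          linear_combination hsplit
        rw [heq, norm_neg]
        apply hPcard
        · exact Finset.erase_subset _ _
        · intro w hw
          exact (Finset.mem_erase.1 hw).1
        · intro w hw
          have h1 := mem_range.1 (Finset.mem_of_mem_erase hw)
          omega
      · have huP : u ≠ P - u := by omega
        have hmem1 : u ∈ range P := mem_range.2 (by omega)
        have hmem2 : P - u ∈ (range P).erase u := by
          rw [Finset.mem_erase]
          exact ⟨by omega, mem_range.2 (by omega)⟩
        have hsplit1 := Finset.add_sum_erase (range P) (fun w => G w * T w) hmem1
        have hsplit2 := Finset.add_sum_erase ((range P).erase u) (fun w => G w * T w) hmem2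
        have hfp : G (P - u) * T (P - u) = G u * T u := by
          rw [hGw_eq (P - u) (by omega) (by omega), show P - (P - u) = u from by omega]
          have hTpu : T (P - u) = ζ ^ (-((u:ℤ) * (n:ℤ))) * T u := by
            rw [hTdef]
            simp only
            have h1 : ζ ^ (((P - u:ℕ)):ℤ) = ζ ^ (-(u:ℤ)) := by
              rw [show ((P - u:ℕ):ℤ) = -(u:ℤ) + (P:ℤ) * 1 from by push_cast; omega, hexp]
            rw [h1, hzneg u]
          rw [hTpu]
          have hz1 : ζ ^ (-(((P - u:ℕ):ℤ) * (n:ℤ))) * ζ ^ (-((u:ℤ) * (n:ℤ))) = 1 := by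
            rw [← zpow_add₀ hζ0]
            have hsum : ((P - u:ℕ):ℤ) + (u:ℤ) = (P:ℤ) := by push_cast; omega
            rw [show -(((P - u:ℕ):ℤ) * (n:ℤ)) + -((u:ℤ) * (n:ℤ)) = (P:ℤ) * (-(n:ℤ))
              from by linear_combination (-(n:ℤ)) * hsum, hPmul]
          calc ζ ^ (-(((P - u:ℕ):ℤ) * (n:ℤ))) * G u * (ζ ^ (-((u:ℤ) * (n:ℤ))) * T u)
              = (ζ ^ (-(((P - u:ℕ):ℤ) * (n:ℤ))) * ζ ^ (-((u:ℤ) * (n:ℤ)))) * (G u * T u) := by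
                ring
            _ = G u * T u := by rw [hz1, one_mul]
        have heq2 : G u * T u + G u * T u = -∑ w ∈ ((range P).erase u).erase (P - u), G w * T w := by
          rw [hB] at hsplit1
          linear_combination hsplit1 + hsplit2 - hfp
        have habs2 : ‖G u * T u‖ ≤
            ‖∑ w ∈ ((range P).erase u).erase (P - u), G w * T w‖ := by
          have h2 : ‖G u * T u + G u * T u‖ = 2 * ‖G u * T u‖ := by
            rw [show G u * T u + G u * T u = 2 * (G u * T u) from by ring, norm_mul]
            norm_num
          rw [heq2, norm_neg] at h2
          linarith [norm_nonneg (G u * T u)]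
        refine le_trans habs2 (hPcard _ ?_ ?_ ?_)
        · exact (Finset.erase_subset _ _).trans (Finset.erase_subset _ _)
        · intro w hw
          exact (Finset.mem_erase.1 (Finset.mem_of_mem_erase hw)).1
        · intro w hw
          exact (Finset.mem_erase.1 hw).1
    -- contradiction
    have hTu : ‖G u * T u‖ = ‖G u‖ * lam u ^ n := by
      rw [norm_mul, hTdef]
      simp only
      rw [norm_pow]
    have hNn : (P:ℝ) * (2 * M) * lam (u+1) ^ n < ε * lam u ^ n := by
      apply hNf u hu n
      have := Finset.le_sup (f := Nf) (Finset.mem_range.2 hu)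
      omega
    have hh1 : ε * lam u ^ n ≤ ‖G u‖ * lam u ^ n :=
      mul_le_mul_of_nonneg_right hGε (pow_nonneg (lam_nonneg u) n)
    have hh2 : (P:ℝ) * (2 * M * lam (u+1) ^ n) = (P:ℝ) * (2 * M) * lam (u+1) ^ n := by ring
    rw [hTu] at hfu
    linarith
  -- Step D : all G w vanish except w = Q
  have hall : ∀ w : ℕ, w < P → w ≠ Q → G w = 0 := by
    intro w hwP hwQ
    rcases Nat.lt_or_ge w Q with h | h
    · exact hCc w h
    · have hw0 : 0 < w := by omega
      rw [hGw_eq w hw0 hwP, hCc (P - w) (by omega), mul_zero]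
  -- Step E : evaluation of ∑ G u ζ^{ua}
  have hEval : ∀ a : ℕ, a ≤ n →
      (P:ℂ) * ((δ (a % P) : ℂ) + (δ ((n - a) % P) : ℂ)) = G Q * (-1)^a := by
    intro a ha
    have hL : ∑ u ∈ range P, G u * ζ ^ ((u:ℤ) * (a:ℤ)) = G Q * (-1)^a := by
      rw [Finset.sum_eq_single Q]
      · congr 1
        rw [zpow_mul, hζQ, zpow_natCast]
      · intro w hw hwQ
        rw [hall w (mem_range.1 hw) hwQ, zero_mul]
      · intro h
        exact absurd (mem_range.2 (by omega)) h
    have hR1 : ∑ u ∈ range P, D (u:ℤ) * ζ ^ ((u:ℤ) * (a:ℤ)) = (P:ℂ) * (δ (a % P) : ℂ) := by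
      have h1 : ∀ u ∈ range P, D (u:ℤ) * ζ ^ ((u:ℤ) * (a:ℤ))
          = ∑ b ∈ range P, (δ b : ℂ) * ζ ^ ((u:ℤ) * ((a:ℤ) - (b:ℤ))) := by
        intro u _
        rw [hDdef]
        simp only
        rw [Finset.sum_mul]
        refine Finset.sum_congr rfl fun b _ => ?_
        rw [mul_assoc, ← zpow_add₀ hζ0]
        congr 2
        ring
      rw [Finset.sum_congr rfl h1, Finset.sum_comm]
      have h2 : ∀ b ∈ range P, ∑ u ∈ range P, (δ b : ℂ) * ζ ^ ((u:ℤ) * ((a:ℤ) - (b:ℤ)))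
          = (δ b : ℂ) * (if (P:ℤ) ∣ ((a:ℤ) - (b:ℤ)) then (P:ℂ) else 0) := by
        intro b _
        rw [← Finset.mul_sum, zsum]
      rw [Finset.sum_congr rfl h2, pick a]
    have hR2 : ∑ u ∈ range P, (ζ ^ (-((u:ℤ) * (n:ℤ))) * D (-(u:ℤ))) * ζ ^ ((u:ℤ) * (a:ℤ))
        = (P:ℂ) * (δ ((n - a) % P) : ℂ) := by
      have h1 : ∀ u ∈ range P, (ζ ^ (-((u:ℤ) * (n:ℤ))) * D (-(u:ℤ))) * ζ ^ ((u:ℤ) * (a:ℤ))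
          = ∑ b ∈ range P, (δ b : ℂ) * ζ ^ ((u:ℤ) * (-((((n - a:ℕ)):ℤ) - (b:ℤ)))) := by
        intro u _
        rw [hDdef]
        simp only
        rw [Finset.mul_sum, Finset.sum_mul]
        refine Finset.sum_congr rfl fun b _ => ?_
        have hna : ((n - a : ℕ) : ℤ) = (n:ℤ) - (a:ℤ) := by push_cast [Nat.cast_sub ha]; ring
        calc ζ ^ (-((u:ℤ) * (n:ℤ))) * ((δ b : ℂ) * ζ ^ (-((-(u:ℤ)) * (b:ℤ)))) * ζ ^ ((u:ℤ) * (a:ℤ))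
            = (δ b : ℂ) * (ζ ^ (-((u:ℤ) * (n:ℤ))) * ζ ^ (-((-(u:ℤ)) * (b:ℤ))) * ζ ^ ((u:ℤ) * (a:ℤ))) := by
              ring
          _ = (δ b : ℂ) * ζ ^ ((u:ℤ) * (-((((n - a:ℕ)):ℤ) - (b:ℤ)))) := by
              rw [← zpow_add₀ hζ0, ← zpow_add₀ hζ0,
                show -((u:ℤ) * (n:ℤ)) + -((-(u:ℤ)) * (b:ℤ)) + (u:ℤ) * (a:ℤ)
                  = (u:ℤ) * (-((((n - a:ℕ)):ℤ) - (b:ℤ))) from by rw [hna]; ring]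
      rw [Finset.sum_congr rfl h1, Finset.sum_comm]
      have h2 : ∀ b ∈ range P, ∑ u ∈ range P, (δ b : ℂ) * ζ ^ ((u:ℤ) * (-((((n - a:ℕ)):ℤ) - (b:ℤ))))
          = (δ b : ℂ) * (if (P:ℤ) ∣ ((((n - a:ℕ)):ℤ) - (b:ℤ)) then (P:ℂ) else 0) := by
        intro b _
        rw [← Finset.mul_sum, zsum]
        congr 1
        exact if_congr (dvd_neg) rfl rfl
      rw [Finset.sum_congr rfl h2, pick (n - a)]
    rw [← hL]
    have h3 : ∀ u ∈ range P, G u * ζ ^ ((u:ℤ) * (a:ℤ))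
        = D (u:ℤ) * ζ ^ ((u:ℤ) * (a:ℤ)) + (ζ ^ (-((u:ℤ) * (n:ℤ))) * D (-(u:ℤ))) * ζ ^ ((u:ℤ) * (a:ℤ)) := by
      intro u _
      rw [hGdef]
      simp only
      ring
    rw [Finset.sum_congr rfl h3, Finset.sum_add_distrib, hR1, hR2, mul_add]
  -- conclusion
  intro a ha
  have hEa := hEval a ha
  have hE0 := hEval 0 (Nat.zero_le n)
  rw [Nat.zero_mod, Nat.sub_zero, pow_zero, mul_one] at hE0
  rw [← hE0] at hEa
  have hfinal : (δ (a % P) : ℤ) + (δ ((n - a) % P) : ℤ)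
      = (-1)^a * ((δ 0 : ℤ) + (δ (n % P) : ℤ)) := by
    have h4 : ((δ (a % P) : ℂ) + (δ ((n - a) % P) : ℂ))
        = (-1)^a * ((δ 0 : ℂ) + (δ (n % P) : ℂ)) := by
      apply mul_left_cancel₀ hPC
      rw [hEa]
      ring
    exact_mod_cast h4
  rw [← hmod a, ← hmod (n - a), ← hmod n] at hfinal
  linarith [hfinal]

/-- Let `δ_l = Σ_{m=0}^j C_m(F)(-1)^{C(l+m,k)}`, so that
`S(σ_{n+j,k}+F) = Σ_{l=0}^n δ_l C(n,l)`. There is an `n₀` such that for every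
`n > n₀`: `Σ_{l=0}^n δ_l C(n,l) = 0` iff there exists `z ∈ ℤ` with
`δ_a + δ_{n−a} = (-1)^{a−1} z` for all `0 ≤ a ≤ n`; moreover, in that case, if `n`
is odd then `δ_{n−a} = −δ_a` for all `0 ≤ a ≤ n`. For `n` large, the perturbation
is balanced iff it is trivially balanced. -/
theorem eventually_balanced_iff_trivially_balanced
    (k j : ℕ) (hk : 1 ≤ k) (hj : 1 ≤ j)
    (F : (Fin j → ZMod 2) → ZMod 2)
    (δ : ℕ → ℤ)
    (hδ : ∀ l : ℕ, δ l =
      ∑ m ∈ Finset.range (j + 1), coefC F m * (-1 : ℤ) ^ Nat.choose (l + m) k) :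
    ∃ n₀ : ℕ, ∀ n : ℕ, n₀ < n →
      ((∑ l ∈ Finset.range (n + 1), δ l * (n.choose l : ℤ) = 0 ↔
        ∃ z : ℤ, ∀ a : ℕ, a ≤ n → δ a + δ (n - a) = (-1 : ℤ) ^ (a + 1) * z) ∧
      (∑ l ∈ Finset.range (n + 1), δ l * (n.choose l : ℤ) = 0 → Odd n →
        ∀ a : ℕ, a ≤ n → δ (n - a) = -δ a)) := by
  have hper : ∀ l, δ (l + 2 * 2^(k-1)) = δ l := by
    intro l
    have h2k : 2 * 2^(k-1) = 2^k := by
      rw [← pow_succ']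
      congr 1
      omega
    rw [hδ, hδ]
    refine Finset.sum_congr rfl fun m _ => ?_
    congr 1
    apply neg_one_pow_congr'
    rw [show l + 2*2^(k-1) + m = (l + m) + 2^k from by rw [h2k]; ring]
    exact choose_add_pow_two_mod k (l+m) k Nat.lt_two_pow_self
  obtain ⟨n₀, hn₀1, hkey⟩ := key_lemma (2^(k-1)) Nat.one_le_two_pow δ hper
  refine ⟨n₀, fun n hn => ?_⟩
  have hn1 : n ≠ 0 := by omega
  have hrefl : ∑ l ∈ Finset.range (n+1), δ (n - l) * (n.choose l : ℤ)
      = ∑ l ∈ Finset.range (n+1), δ l * (n.choose l : ℤ) := by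
    rw [← Finset.sum_range_reflect (fun l => δ l * (n.choose l : ℤ)) (n+1)]
    refine Finset.sum_congr rfl fun i hi => ?_
    rw [Finset.mem_range] at hi
    rw [show n + 1 - 1 - i = n - i from by omega, Nat.choose_symm (by omega : i ≤ n)]
  have easy : (∃ z : ℤ, ∀ a : ℕ, a ≤ n → δ a + δ (n - a) = (-1:ℤ)^(a+1) * z) →
      ∑ l ∈ Finset.range (n+1), δ l * (n.choose l : ℤ) = 0 := by
    rintro ⟨z, hz⟩
    have h2 : (∑ l ∈ Finset.range (n+1), δ l * (n.choose l : ℤ))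
        + (∑ l ∈ Finset.range (n+1), δ l * (n.choose l : ℤ))
        = ∑ l ∈ Finset.range (n+1), ((-1:ℤ)^(l+1) * z) * (n.choose l : ℤ) := by
      nth_rewrite 2 [← hrefl]
      rw [← Finset.sum_add_distrib]
      refine Finset.sum_congr rfl fun l hl => ?_
      rw [Finset.mem_range] at hl
      rw [← add_mul, hz l (by omega)]
    have h4 := Int.alternating_sum_range_choose_of_ne (n := n) hn1
    have h3 : ∑ l ∈ Finset.range (n+1), ((-1:ℤ)^(l+1) * z) * (n.choose l : ℤ) = 0 := by
      calc ∑ l ∈ Finset.range (n+1), ((-1:ℤ)^(l+1) * z) * (n.choose l : ℤ)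
          = (-z) * ∑ l ∈ Finset.range (n+1), (-1:ℤ)^l * (n.choose l : ℤ) := by
            rw [Finset.mul_sum]
            refine Finset.sum_congr rfl fun l _ => ?_
            rw [pow_succ]
            ring
        _ = 0 := by rw [h4, mul_zero]
    omega
  refine ⟨⟨fun hS => ?_, easy⟩, fun hS hodd a ha => ?_⟩
  · refine ⟨-(δ 0 + δ n), fun a ha => ?_⟩
    rw [hkey n hn hS a ha, pow_succ]
    ring
  · have h1 := hkey n hn hS a ha
    have h2 := hkey n hn hS n le_rfl
    rw [Nat.sub_self, hodd.neg_one_pow] at h2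
    have h4 : δ 0 + δ n = 0 := by linarith
    rw [h4, mul_zero] at h1
    linarith
end

section
/- Let j ≥ 1 and n ≥ 1 be integers, let Γ_j = {x ∈ ℤ : |x| ≤ 2^{j−1}} and V_j = {0, 1, …, 2^{j−1}}. Let γ_j(n) be the number of tuples (x₀, x₁, …, x_n) ∈ Γ_j^{n+1} satisfying Σ_{l=0}^{n} x_l·C(n,l) = 0. Then γ_j(n) = Σ_{x ∈ V_j^{n+1}} 2^{w(x)} · ∫₀¹ Π_{i=0}^{n} cos(π·x_i·C(n,i)·s) ds, where w(x) denotes the number of non-zero entries of the tuple x = (x₀,…,x_n). -/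
open Finset


lemma sum_piFinset_succ {β} [AddCommMonoid β] (m : ℕ) (S : Finset ℤ)
    (f : (Fin (m+1) → ℤ) → β) :
    ∑ y ∈ Fintype.piFinset (fun _ : Fin (m+1) => S), f y
      = ∑ z ∈ S, ∑ t ∈ Fintype.piFinset (fun _ : Fin m => S), f (Fin.cons z t) := by
  rw [← Finset.sum_product']
  refine Finset.sum_nbij' (fun y => (y 0, Fin.tail y)) (fun p => Fin.cons p.1 p.2) ?_ ?_ ?_ ?_ ?_ <;>
    simp [Fintype.mem_piFinset, Fin.forall_fin_succ, Fin.tail]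

lemma sum_sin_zero (S : Finset ℤ) (hS : ∀ z ∈ S, -z ∈ S) (c : ℝ) :
    ∑ z ∈ S, Real.sin ((z : ℝ) * c) = 0 := by
  refine Finset.sum_involution (fun z _ => -z) (fun z hz => ?_) (fun z hz h hz2 => ?_)
    (fun z hz => hS z hz) (fun z hz => neg_neg z)
  · push_cast; rw [neg_mul, Real.sin_neg]; ring
  · have h0 : -z = z := hz2
    have : z = 0 := by omega
    subst this; exact h (by norm_num)

lemma key_identity (S : Finset ℤ) (hS : ∀ z ∈ S, -z ∈ S) :
    ∀ (m : ℕ) (c : Fin m → ℝ),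
    ∑ y ∈ Fintype.piFinset (fun _ : Fin m => S), Real.cos (∑ i, (y i : ℝ) * c i)
      = ∑ y ∈ Fintype.piFinset (fun _ : Fin m => S), ∏ i, Real.cos ((y i : ℝ) * c i) := by
  intro m
  induction m with
  | zero => intro c; simp
  | succ m ih =>
    intro c
    set P := Fintype.piFinset (fun _ : Fin m => S) with hP
    rw [sum_piFinset_succ, sum_piFinset_succ]
    have hL : ∀ (z : ℤ) (t : Fin m → ℤ),
        Real.cos (∑ i, ((Fin.cons z t : Fin (m+1) → ℤ) i : ℝ) * c i)
          = Real.cos ((z:ℝ) * c 0) * Real.cos (∑ i, (t i : ℝ) * c i.succ)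
            - Real.sin ((z:ℝ) * c 0) * Real.sin (∑ i, (t i : ℝ) * c i.succ) := by
      intro z t
      rw [Fin.sum_univ_succ, Real.cos_add]
      simp
    have hR : ∀ (z : ℤ) (t : Fin m → ℤ),
        (∏ i, Real.cos (((Fin.cons z t : Fin (m+1) → ℤ) i : ℝ) * c i))
          = Real.cos ((z:ℝ) * c 0) * ∏ i, Real.cos ((t i : ℝ) * c i.succ) := by
      intro z t
      rw [Fin.prod_univ_succ]
      simp
    simp only [hL, hR]
    have step1 : ∑ z ∈ S, ∑ t ∈ P,
        (Real.cos ((z:ℝ) * c 0) * Real.cos (∑ i, (t i : ℝ) * c i.succ)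
          - Real.sin ((z:ℝ) * c 0) * Real.sin (∑ i, (t i : ℝ) * c i.succ))
        = ∑ z ∈ S, (Real.cos ((z:ℝ) * c 0) * ∑ t ∈ P, Real.cos (∑ i, (t i : ℝ) * c i.succ)
          - Real.sin ((z:ℝ) * c 0) * ∑ t ∈ P, Real.sin (∑ i, (t i : ℝ) * c i.succ)) :=
      Finset.sum_congr rfl (fun z _ => by
        rw [Finset.sum_sub_distrib, ← Finset.mul_sum, ← Finset.mul_sum])
    rw [step1, Finset.sum_sub_distrib, ← Finset.sum_mul, ← Finset.sum_mul, sum_sin_zero S hS,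
      zero_mul, sub_zero, ih (fun i => c i.succ), Finset.sum_mul_sum]

lemma integral_cos_int (m : ℤ) :
    (∫ s in (0:ℝ)..1, Real.cos (Real.pi * (m:ℝ) * s)) = if m = 0 then 1 else 0 := by
  by_cases hm : m = 0
  · simp [hm]
  · have ha : Real.pi * (m:ℝ) ≠ 0 := by
      apply mul_ne_zero Real.pi_ne_zero
      exact_mod_cast hm
    rw [if_neg hm]
    rw [intervalIntegral.integral_comp_mul_left Real.cos ha]
    simp only [integral_cos, Real.sin_zero, sub_zero, mul_comm Real.pi (m:ℝ), Real.sin_int_mul_pi, smul_zero, mul_one, mul_zero, zero_sub, smul_neg, neg_zero]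


lemma fiber_card (N : ℕ) (m : ℕ) (x : Fin m → ℕ) (hx : ∀ i, x i ≤ N) :
    ((Fintype.piFinset (fun _ : Fin m => Finset.Icc (-(N:ℤ)) (N:ℤ))).filter
      (fun y => (fun i => (y i).natAbs) = x)).card
    = 2 ^ (Finset.univ.filter (fun i => x i ≠ 0)).card := by
  have hset : ((Fintype.piFinset (fun _ : Fin m => Finset.Icc (-(N:ℤ)) (N:ℤ))).filter
      (fun y => (fun i => (y i).natAbs) = x))
      = Fintype.piFinset (fun i => (Finset.Icc (-(N:ℤ)) (N:ℤ)).filter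
          (fun z => z.natAbs = x i)) := by
    ext y
    simp only [Finset.mem_filter, Fintype.mem_piFinset, funext_iff, forall_and]
  rw [hset, Fintype.card_piFinset]
  have hcard : ∀ i, ((Finset.Icc (-(N:ℤ)) (N:ℤ)).filter (fun z => z.natAbs = x i)).card
      = if x i = 0 then 1 else 2 := by
    intro i
    have hxi := hx i
    split_ifs with h
    · have : ((Finset.Icc (-(N:ℤ)) (N:ℤ)).filter (fun z => z.natAbs = x i)) = {0} := by
        ext z; simp only [Finset.mem_filter, Finset.mem_Icc, Finset.mem_singleton]; omega
      simp [this]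
    · have : ((Finset.Icc (-(N:ℤ)) (N:ℤ)).filter (fun z => z.natAbs = x i))
          = {(x i : ℤ), -(x i : ℤ)} := by
        ext z
        simp only [Finset.mem_filter, Finset.mem_Icc, Finset.mem_insert, Finset.mem_singleton]
        omega
      rw [this, Finset.card_insert_of_notMem (by simp; omega), Finset.card_singleton]
  rw [Finset.prod_congr rfl (fun i _ => hcard i)]
  rw [Finset.prod_ite, Finset.prod_const_one, one_mul, Finset.prod_const]


/-- Integral representation of the number `γ_j(n)` of solutions
`(x₀,…,x_n) ∈ Γ_j^{n+1}`, `Γ_j = {x ∈ ℤ : |x| ≤ 2^{j−1}}`, of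
`Σ_{l=0}^n x_l C(n,l) = 0`:
`γ_j(n) = Σ_{x ∈ V_j^{n+1}} 2^{w(x)} ∫₀¹ Π_{i=0}^n cos(π x_i C(n,i) s) ds`,
where `V_j = {0,1,…,2^{j−1}}` and `w(x)` is the number of non-zero entries of `x`. -/
theorem count_solutions_integral_representation
    (j n : ℕ) (hj : 1 ≤ j) (hn : 1 ≤ n) :
    (((Fintype.piFinset
        (fun _ : Fin (n + 1) => Finset.Icc (-(2 ^ (j - 1) : ℤ)) (2 ^ (j - 1)))).filter
          (fun x : Fin (n + 1) → ℤ => ∑ i, x i * (n.choose i : ℤ) = 0)).card : ℝ) =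
      ∑ x ∈ Fintype.piFinset (fun _ : Fin (n + 1) => Finset.range (2 ^ (j - 1) + 1)),
        (2 : ℝ) ^ ((Finset.univ.filter (fun i : Fin (n + 1) => x i ≠ 0)).card) *
          ∫ s in (0:ℝ)..1, ∏ i : Fin (n + 1),
            Real.cos (Real.pi * (x i : ℝ) * (n.choose i : ℝ) * s) := by
  classical
  set N : ℕ := 2 ^ (j - 1) with hN
  have hNcast : (-(2 ^ (j - 1) : ℤ)) = -(N : ℤ) := by push_cast [hN]; ring
  have hNcast2 : ((2 ^ (j - 1) : ℤ)) = (N : ℤ) := by push_cast [hN]; ring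
  set m : ℕ := n + 1 with hm
  set S : Finset ℤ := Finset.Icc (-(N:ℤ)) (N:ℤ) with hSdef
  have hS : ∀ z ∈ S, -z ∈ S := by intro z hz; simp only [hSdef, Finset.mem_Icc] at *; omega
  set G : Finset (Fin m → ℤ) := Fintype.piFinset (fun _ : Fin m => S) with hG
  set c : Fin m → ℝ := fun i => (n.choose i : ℝ) with hc
  -- the integrand for integer tuples
  set F : (Fin m → ℤ) → ℝ :=
    fun y => ∫ s in (0:ℝ)..1, ∏ i, Real.cos (Real.pi * (y i : ℝ) * c i * s) with hF
  -- Step A : LHS = ∑ y ∈ G, F y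
  have stepA : (((G.filter
      (fun x : Fin m → ℤ => ∑ i, x i * (n.choose i : ℤ) = 0)).card : ℕ) : ℝ)
      = ∑ y ∈ G, F y := by
    rw [Finset.card_filter]
    push_cast [apply_ite (Nat.cast : ℕ → ℝ)]
    have h1 : ∀ y : Fin m → ℤ,
        (if (∑ i, y i * (n.choose i : ℤ)) = 0 then (1:ℝ) else 0)
          = ∫ s in (0:ℝ)..1, Real.cos (Real.pi * ((∑ i, y i * (n.choose i : ℤ) : ℤ) : ℝ) * s) :=
      fun y => (integral_cos_int _).symm
    rw [Finset.sum_congr rfl (fun y _ => h1 y)]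
    rw [← intervalIntegral.integral_finset_sum (fun y _ =>
      (Continuous.intervalIntegrable (by fun_prop) _ _))]
    rw [hF]
    rw [← intervalIntegral.integral_finset_sum (fun y _ =>
      (Continuous.intervalIntegrable (by fun_prop) _ _))]
    apply intervalIntegral.integral_congr
    intro s _
    have lhs_eq : ∀ y : Fin m → ℤ,
        Real.cos (Real.pi * ((∑ i, y i * (n.choose i : ℤ) : ℤ) : ℝ) * s)
          = Real.cos (∑ i, (y i : ℝ) * (Real.pi * c i * s)) := by
      intro y
      congr 1
      push_cast [hc]
      rw [Finset.mul_sum, Finset.sum_mul]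
      exact Finset.sum_congr rfl (fun i _ => by ring)
    have rhs_eq : ∀ y : Fin m → ℤ,
        (∏ i, Real.cos (Real.pi * (y i : ℝ) * c i * s))
          = ∏ i, Real.cos ((y i : ℝ) * (Real.pi * c i * s)) := by
      intro y
      exact Finset.prod_congr rfl (fun i _ => by ring_nf)
    simp only [lhs_eq, rhs_eq]
    exact key_identity S hS m (fun i => Real.pi * c i * s)
  rw [hNcast, hNcast2, stepA]
  -- Step B : group by absolute values
  set V : Finset (Fin m → ℕ) := Fintype.piFinset (fun _ : Fin m => Finset.range (N + 1)) with hV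
  set H : (Fin m → ℕ) → ℝ :=
    fun x => ∫ s in (0:ℝ)..1, ∏ i, Real.cos (Real.pi * (x i : ℝ) * c i * s) with hH
  have heven : ∀ y : Fin m → ℤ, F y = H (fun i => (y i).natAbs) := by
    intro y
    rw [hF, hH]
    apply intervalIntegral.integral_congr
    intro s _
    apply Finset.prod_congr rfl
    intro i _
    rw [Nat.cast_natAbs, Int.cast_abs]
    rcases abs_cases ((y i : ℝ)) with ⟨h1, _⟩ | ⟨h1, _⟩
    · rw [h1]
    · rw [h1, show Real.pi * -((y i : ℝ)) * c i * s = -(Real.pi * (y i : ℝ) * c i * s) by ring,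
        Real.cos_neg]
  have hmaps : ∀ y ∈ G, (fun i => (y i).natAbs) ∈ V := by
    intro y hy
    simp only [hG, hV, Fintype.mem_piFinset, hSdef, Finset.mem_Icc, Finset.mem_range] at *
    intro i
    have := hy i
    omega
  rw [Finset.sum_congr rfl (fun y _ => heven y),
    ← Finset.sum_fiberwise_of_maps_to hmaps (fun y => H (fun i => (y i).natAbs))]
  apply Finset.sum_congr rfl
  intro x hx
  have hfib : ∀ y ∈ G.filter (fun y => (fun i => (y i).natAbs) = x),
      H (fun i => (y i).natAbs) = H x := by
    intro y hy
    rw [Finset.mem_filter] at hy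
    rw [hy.2]
  rw [Finset.sum_congr rfl hfib, Finset.sum_const, nsmul_eq_mul]
  have hxle : ∀ i, x i ≤ N := by
    intro i
    have := (Fintype.mem_piFinset.mp hx) i
    simp only [Finset.mem_range] at this
    omega
  rw [fiber_card N m x hxle]
  push_cast
  rfl
end
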